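/- With h = 𝟙 ∈ ℝᵗ (all-ones) and noise covariance Ñ = σ²·(((t+1)/t)·I_t − (1/t)·𝟙𝟙ᵀ), the quantity 𝟙ᵀÑ⁻¹𝟙 ≤ t²/σ²; hence the information leaked to t colluding servers satisfies η_c ≤ log₂(1 + r²t²/σ²). -/

import Mathlib

theorem collusion_leakage_bound (t : ℕ) (ht : 1 ≤ t) (σ : ℝ) (hσ : 0 < σ)
    (Ntil : Matrix (Fin t) (Fin t) ℝ)
    (hN : Ntil = σ^2 • ((((t : ℝ) + 1) / t) • (1 : Matrix (Fin t) (Fin t) ℝ)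
        - ((t : ℝ))⁻¹ • Matrix.of (fun _ _ => (1 : ℝ)))) :
    dotProduct (fun _ => (1 : ℝ)) (Ntil⁻¹.mulVec (fun _ => 1)) ≤ t^2 / σ^2 ∧
    (∀ ηc r : ℝ,
      ηc ≤ Real.logb 2 (1 + r^2 *
        dotProduct (fun _ => (1 : ℝ)) (Ntil⁻¹.mulVec (fun _ => 1))) →
      ηc ≤ Real.logb 2 (1 + r^2 * t^2 / σ^2)) := by
  have htR : (1:ℝ) ≤ (t:ℝ) := by exact_mod_cast ht
  have ht0 : (t:ℝ) ≠ 0 := by linarith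
  have ht1 : (t:ℝ) + 1 ≠ 0 := by linarith
  have hσ0 : σ^2 ≠ 0 := by positivity
  set J : Matrix (Fin t) (Fin t) ℝ := Matrix.of (fun _ _ => (1:ℝ)) with hJdef
  have hJJ : J * J = (t:ℝ) • J := by
    ext i j
    simp [hJdef, Matrix.mul_apply, Matrix.smul_apply]
  set c : ℝ := (t:ℝ) / (σ^2 * ((t:ℝ)+1)) with hc
  have hmul : Ntil * (c • (1 + J)) = 1 := by
    rw [hN]
    rw [Matrix.smul_mul, Matrix.mul_smul, Matrix.sub_mul, Matrix.smul_mul,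
      Matrix.smul_mul, Matrix.mul_add, Matrix.mul_add, Matrix.one_mul,
      Matrix.one_mul, Matrix.mul_one, hJJ]
    have h1 : (((t:ℝ)+1)/t) • ((1 : Matrix (Fin t) (Fin t) ℝ) + J)
        - (t:ℝ)⁻¹ • (J + (t:ℝ) • J)
        = (((t:ℝ)+1)/t) • (1 : Matrix (Fin t) (Fin t) ℝ) := by
      have e1 : ((t:ℝ)+1)/t = (t:ℝ)⁻¹ + (t:ℝ)⁻¹ * t := by field_simp; ring
      rw [e1]; module
    rw [h1, smul_smul, smul_smul]
    have : σ^2 * c * (((t:ℝ)+1)/t) = 1 := by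
      rw [hc]; field_simp
    rw [this, one_smul]
  have hinv : Ntil⁻¹ = c • (1 + J) := Matrix.inv_eq_right_inv hmul
  have hdot : dotProduct (fun _ => (1 : ℝ)) (Ntil⁻¹.mulVec (fun _ => 1))
      = (t:ℝ)^2 / σ^2 := by
    rw [hinv]
    have hmv : ((c • ((1 : Matrix (Fin t) (Fin t) ℝ) + J)).mulVec (fun _ => 1))
        = fun _ => c * (1 + t) := by
      funext i
      simp only [Matrix.mulVec, dotProduct, Matrix.smul_apply, hJdef,
        Matrix.add_apply, Matrix.one_apply, Matrix.of_apply, smul_eq_mul]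
      simp only [mul_one]
      rw [← Finset.mul_sum]
      congr 1
      rw [Finset.sum_add_distrib]
      simp
    rw [hmv]
    simp [dotProduct, hc]
    field_simp
    ring
  constructor
  · rw [hdot]
  · intro ηc r h
    rw [hdot] at h
    calc ηc ≤ Real.logb 2 (1 + r^2 * ((t:ℝ)^2 / σ^2)) := h
      _ = Real.logb 2 (1 + r^2 * t^2 / σ^2) := by ring_nf
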